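/- Summing the τ = 0 cross-term over i: for all positive integers n and α, β > 0, ∑_{i=1}^{n} (1/α) · (1/(n+2)) · [ n − 2i + 1 − i(n−i+1)(Ψ(i) − Ψ(n−i+1)) ] = 0. -/

import Mathlib

/-- The digamma function, the logarithmic derivative of the Gamma function. -/
noncomputable def digamma (x : ℝ) : ℝ := deriv (fun y => Real.log (Real.Gamma y)) x

theorem sum_cross_term_zero (n : ℕ) (hn : 0 < n) (α β : ℝ) (hα : 0 < α) (hβ : 0 < β) :
    ∑ i ∈ Finset.Icc 1 n,
      (1/α) * (1/((n : ℝ) + 2)) *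
        ((n : ℝ) - 2 * i + 1
          - (i : ℝ) * ((n : ℝ) - i + 1) * (digamma i - digamma ((n : ℝ) - i + 1))) = 0 := by
  set f : ℕ → ℝ := fun i =>
    (1/α) * (1/((n : ℝ) + 2)) *
      ((n : ℝ) - 2 * i + 1
        - (i : ℝ) * ((n : ℝ) - i + 1) * (digamma i - digamma ((n : ℝ) - i + 1))) with hf
  have hrefl : ∑ i ∈ Finset.Icc 1 n, f i = ∑ i ∈ Finset.Icc 1 n, f (n + 1 - i) := by
    refine Finset.sum_nbij' (fun i => n + 1 - i) (fun i => n + 1 - i) ?_ ?_ ?_ ?_ ?_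
    · intro i hi; simp only [Finset.mem_Icc] at *; omega
    · intro i hi; simp only [Finset.mem_Icc] at *; omega
    · intro i hi; simp only [Finset.mem_Icc] at hi; show n + 1 - (n + 1 - i) = i; omega
    · intro i hi; simp only [Finset.mem_Icc] at hi; show n + 1 - (n + 1 - i) = i; omega
    · intro i hi; simp only [Finset.mem_Icc] at hi
      show f i = f (n + 1 - (n + 1 - i)); congr 1; omega
  have hneg : ∀ i ∈ Finset.Icc 1 n, f (n + 1 - i) = - f i := by
    intro i hi
    simp only [Finset.mem_Icc] at hi
    have hcast : ((n + 1 - i : ℕ) : ℝ) = (n : ℝ) + 1 - i := by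
      have : (i : ℕ) ≤ n + 1 := by omega
      push_cast [Nat.cast_sub this]; ring
    simp only [hf, hcast]
    have h1 : (n : ℝ) - ((n : ℝ) + 1 - i) + 1 = (i : ℝ) := by ring
    rw [h1]
    ring
  have : ∑ i ∈ Finset.Icc 1 n, f i = - ∑ i ∈ Finset.Icc 1 n, f i := by
    calc ∑ i ∈ Finset.Icc 1 n, f i = ∑ i ∈ Finset.Icc 1 n, f (n + 1 - i) := hrefl
      _ = ∑ i ∈ Finset.Icc 1 n, (- f i) := Finset.sum_congr rfl hneg
      _ = - ∑ i ∈ Finset.Icc 1 n, f i := by rw [Finset.sum_neg_distrib]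
  linarith
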